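/- Exponential decay of correlations for the grand canonical measure: Fix ρ ∈ (1/2,1). There exist constants C = C(ρ) > 0 and C′ = C′(ρ) > 0 such that for all integers k ≥ 1 and ℓ ≥ 1 and all σ₁, σ₂ ∈ {0,1}^{Λ_k} having no two adjacent empty sites, setting L = 2k+ℓ and J(σ₁,σ₂) = Σ W_ρ^L(τ), the sum running over all τ ∈ {0,1}^{Λ_L} with τ(x) = σ₁(x) for 1 ≤ x ≤ k and τ(k+ℓ+x) = σ₂(x) for 1 ≤ x ≤ k, one has |J(σ₁,σ₂) − W_ρ^k(σ₁)·W_ρ^k(σ₂)| ≤ C′·e^{−Cℓ}·W_ρ^k(σ₁)·W_ρ^k(σ₂). -/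

import Mathlib

open scoped BigOperators
open scoped Classical

namespace FEP

/-- The number of particles of `σ` in `Λ_ℓ = {1,…,ℓ}`. -/
def pcount (ℓ : ℕ) (σ : ℕ → Bool) : ℕ :=
  ∑ x ∈ Finset.Icc 1 ℓ, (if σ x then 1 else 0)

/-- `σ` has no two adjacent empty sites in `Λ_ℓ`. -/
def noAdj (ℓ : ℕ) (σ : ℕ → Bool) : Prop :=
  ∀ x ∈ Finset.Ico 1 ℓ, (σ x = true ∨ σ (x + 1) = true)

/-- The cylinder weight `W_ρ^ℓ(σ)` of the infinite-volume grand canonical measure `π_ρ`. -/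
noncomputable def W (ρ : ℝ) (ℓ : ℕ) (σ : ℕ → Bool) : ℝ :=
  if ∀ x ∈ Finset.Ico 1 ℓ, (σ x = true ∨ σ (x + 1) = true) then
    (1 - ρ) * ((1 - ρ) / ρ) ^ ((ℓ : ℤ) - 1 - (pcount ℓ σ : ℤ)) *
      ((2 * ρ - 1) / ρ) ^
        (2 * (pcount ℓ σ : ℤ) - (ℓ : ℤ) + 1 - (if σ 1 then 1 else 0) -
          (if σ ℓ then 1 else 0))
  else 0

/-- Extension of a configuration on `Λ_L` (indexed by `Fin L`, site `i` of `Λ_L` being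
`⟨i-1,_⟩`) to a configuration `ℕ → Bool`. -/
def extSeg (L : ℕ) (σ : Fin L → Bool) : ℕ → Bool :=
  fun x => if h : 1 ≤ x ∧ x ≤ L then σ ⟨x - 1, by omega⟩ else false

end FEP

namespace FEP

noncomputable def Mtr (ρ : ℝ) : Bool → Bool → ℝ
  | false, false => 0
  | false, true  => 1
  | true,  false => (1-ρ)/ρ
  | true,  true  => (2*ρ-1)/ρ

noncomputable def piv (ρ : ℝ) : Bool → ℝ
  | false => 1 - ρ
  | true  => ρ

noncomputable def V (ρ : ℝ) (ℓ : ℕ) (σ : ℕ → Bool) : ℝ :=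
  piv ρ (σ 1) * ∏ x ∈ Finset.Ico 1 ℓ, Mtr ρ (σ x) (σ (x+1))

noncomputable def S (ρ : ℝ) : ℕ → Bool → Bool → ℝ
  | 0, a, b => if a = b then (1:ℝ) else 0
  | (n+1), a, b => ∑ c : Bool, Mtr ρ a c * S ρ n c b

def pext (n : ℕ) (a b : Bool) (η : Fin n → Bool) : ℕ → Bool :=
  fun i => if h : 1 ≤ i ∧ i ≤ n then η ⟨i-1, by omega⟩ else if i = 0 then a else b

def jmap (k ℓ : ℕ) (σ₁ σ₂ : ℕ → Bool) (η : Fin ℓ → Bool) : Fin (2*k+ℓ) → Bool :=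
  fun i => if h1 : i.val < k then σ₁ (i.val+1)
    else if h : i.val < k+ℓ then η ⟨i.val - k, by omega⟩
    else σ₂ (i.val+1-k-ℓ)


variable {ρ : ℝ} (h1 : 1/2 < ρ) (h2 : ρ < 1)

lemma rho_pos (h1 : 1/2 < ρ) : 0 < ρ := by linarith

lemma Mtr_nonneg (h1 : 1/2 < ρ) (h2 : ρ < 1) (a b : Bool) : 0 ≤ Mtr ρ a b := by
  cases a <;> cases b <;> simp [Mtr] <;> apply div_nonneg <;> linarith

lemma piv_pos (h1 : 1/2 < ρ) (h2 : ρ < 1) (b : Bool) : 0 < piv ρ b := by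
  cases b <;> simp [piv] <;> linarith

lemma Mtr_eq (h1 : 1/2 < ρ) (a b : Bool) :
    Mtr ρ a b = piv ρ b + (-(1-ρ)/ρ) * ((if a = b then (1:ℝ) else 0) - piv ρ b) := by
  have hρ : ρ ≠ 0 := by positivity
  cases a <;> cases b <;> simp [Mtr, piv] <;> field_simp <;> ring

lemma Mtr_row (h1 : 1/2 < ρ) (a : Bool) : Mtr ρ a false + Mtr ρ a true = 1 := by
  have hρ : ρ ≠ 0 := by positivity
  cases a <;> simp [Mtr] <;> field_simp <;> ring

lemma S_closed (h1 : 1/2 < ρ) (n : ℕ) (a b : Bool) :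
    S ρ n a b = piv ρ b + (-(1-ρ)/ρ)^n * ((if a = b then (1:ℝ) else 0) - piv ρ b) := by
  induction n generalizing a with
  | zero => simp [S]
  | succ n ih =>
    have hρ : ρ ≠ 0 := by positivity
    have : S ρ (n+1) a b = ∑ c : Bool, Mtr ρ a c * S ρ n c b := rfl
    rw [this, Fintype.sum_bool, ih, ih, Mtr_eq h1 a true, Mtr_eq h1 a false, pow_succ]
    cases a <;> cases b <;> simp [piv] <;> ring


lemma W_eq_V (h1 : 1/2 < ρ) (h2 : ρ < 1) (ℓ : ℕ) (hℓ : 1 ≤ ℓ) (σ : ℕ → Bool) :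
    W ρ ℓ σ = V ρ ℓ σ := by
  have hρ : (0:ℝ) < ρ := by linarith
  have hq : ((1-ρ)/ρ : ℝ) ≠ 0 := ne_of_gt (div_pos (by linarith) hρ)
  have hr : ((2*ρ-1)/ρ : ℝ) ≠ 0 := ne_of_gt (div_pos (by linarith) hρ)
  by_cases hna : ∀ x ∈ Finset.Ico 1 ℓ, (σ x = true ∨ σ (x + 1) = true)
  · induction ℓ, hℓ using Nat.le_induction with
    | base =>
      have hp : pcount 1 σ = if σ 1 then 1 else 0 := by
        rw [pcount, Finset.Icc_self, Finset.sum_singleton]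
      rw [W, if_pos hna, V]
      simp only [Finset.Ico_self, Finset.prod_empty, mul_one, hp]
      rcases h : σ 1 with _ | _
      · norm_num [piv]
      · norm_num [piv]
        have hne : (1:ℝ)-ρ ≠ 0 := by linarith
        field_simp
    | succ ℓ hℓ ih =>
      have hsub : Finset.Ico 1 ℓ ⊆ Finset.Ico 1 (ℓ+1) := by
        apply Finset.Ico_subset_Ico le_rfl; omega
      have hna' : ∀ x ∈ Finset.Ico 1 ℓ, (σ x = true ∨ σ (x + 1) = true) :=
        fun x hx => hna x (hsub hx)
      have hVstep : V ρ (ℓ+1) σ = V ρ ℓ σ * Mtr ρ (σ ℓ) (σ (ℓ+1)) := by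
        rw [V, V, Finset.prod_Ico_succ_top hℓ]
        ring
      rw [hVstep, ← ih hna']
      have hpc : (pcount (ℓ+1) σ : ℤ) = (pcount ℓ σ : ℤ) + (if σ (ℓ+1) then 1 else 0) := by
        rw [pcount, pcount, ← Finset.Ico_add_one_right_eq_Icc, ← Finset.Ico_add_one_right_eq_Icc,
          Finset.sum_Ico_succ_top (by omega : 1 ≤ ℓ+1)]
        push_cast
        split <;> simp
      have hedge : σ ℓ = true ∨ σ (ℓ+1) = true := hna ℓ (by simp; omega)
      rw [W, if_pos hna, W, if_pos hna']
      rcases hℓσ : σ ℓ with _ | _ <;> rcases hℓσ' : σ (ℓ+1) with _ | _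
      · rw [hℓσ] at hedge; rw [hℓσ'] at hedge; simp at hedge
      · simp only [hpc, hℓσ, hℓσ', Mtr, if_true, if_false]
        push_cast
        rw [mul_one]
        congr 1
        · congr 1
          ring
        · congr 1
          ring
      · simp only [hpc, hℓσ, hℓσ', Mtr, if_true, if_false]
        push_cast
        rw [show ((ℓ:ℤ) + 1 - 1 - ((pcount ℓ σ : ℤ) + 0)) = ((ℓ:ℤ) - 1 - (pcount ℓ σ : ℤ)) + 1 by ring,
          zpow_add_one₀ hq,
          show ((2 * ((pcount ℓ σ : ℤ) + 0) - ((ℓ:ℤ) + 1) + 1 - if σ 1 = true then (1:ℤ) else 0) - 0)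
             = ((2 * (pcount ℓ σ : ℤ) - (ℓ:ℤ) + 1 - if σ 1 = true then (1:ℤ) else 0) - 1) by ring]
        ring
      · simp only [hpc, hℓσ, hℓσ', Mtr, if_true, if_false]
        push_cast
        rw [show ((ℓ:ℤ) + 1 - 1 - ((pcount ℓ σ : ℤ) + 1)) = ((ℓ:ℤ) - 1 - (pcount ℓ σ : ℤ)) by ring,
          show ((2 * ((pcount ℓ σ : ℤ) + 1) - ((ℓ:ℤ) + 1) + 1 - if σ 1 = true then (1:ℤ) else 0) - 1)
             = ((2 * (pcount ℓ σ : ℤ) - (ℓ:ℤ) + 1 - if σ 1 = true then (1:ℤ) else 0) - 1) + 1 by ring,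
          zpow_add_one₀ hr]
        ring
  · rw [W, if_neg hna, V]
    push_neg at hna
    obtain ⟨x, hx, hσx⟩ := hna
    have h0 : Mtr ρ (σ x) (σ (x+1)) = 0 := by
      rcases hσx with ⟨hx1, hx2⟩
      simp only [Bool.not_eq_true] at hx1 hx2
      rw [hx1, hx2]; rfl
    rw [Finset.prod_eq_zero hx h0, mul_zero]


lemma jmap_lo (k ℓ : ℕ) (σ₁ σ₂ : ℕ → Bool) (η : Fin ℓ → Bool) (x : ℕ)
    (hx1 : 1 ≤ x) (hx2 : x ≤ k) :
    extSeg (2*k+ℓ) (jmap k ℓ σ₁ σ₂ η) x = σ₁ x := by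
  rw [extSeg, dif_pos ⟨hx1, by omega⟩]
  simp only [jmap]
  rw [dif_pos (by omega : x - 1 < k)]
  congr 1
  omega

lemma jmap_mid (k ℓ : ℕ) (σ₁ σ₂ : ℕ → Bool) (η : Fin ℓ → Bool) (x : ℕ)
    (hx1 : k < x) (hx2 : x ≤ k + ℓ) :
    extSeg (2*k+ℓ) (jmap k ℓ σ₁ σ₂ η) x = η ⟨x - k - 1, by omega⟩ := by
  rw [extSeg, dif_pos ⟨by omega, by omega⟩]
  simp only [jmap]
  rw [dif_neg (by omega : ¬ x - 1 < k),
    dif_pos (by omega : x - 1 < k + ℓ)]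
  congr 1
  simp only [Fin.mk.injEq]
  omega

lemma jmap_hi (k ℓ : ℕ) (σ₁ σ₂ : ℕ → Bool) (η : Fin ℓ → Bool) (x : ℕ)
    (hx1 : k + ℓ < x) (hx2 : x ≤ 2*k + ℓ) :
    extSeg (2*k+ℓ) (jmap k ℓ σ₁ σ₂ η) x = σ₂ (x - k - ℓ) := by
  rw [extSeg, dif_pos ⟨by omega, by omega⟩]
  simp only [jmap]
  rw [dif_neg (by omega : ¬ x - 1 < k),
    dif_neg (by omega : ¬ x - 1 < k + ℓ)]
  congr 1
  omega

lemma jmap_pext (k ℓ : ℕ) (hk : 1 ≤ k) (σ₁ σ₂ : ℕ → Bool) (η : Fin ℓ → Bool) (i : ℕ)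
    (hi : i ≤ ℓ + 1) :
    extSeg (2*k+ℓ) (jmap k ℓ σ₁ σ₂ η) (k + i) = pext ℓ (σ₁ k) (σ₂ 1) η i := by
  rcases Nat.eq_zero_or_pos i with h0 | h0
  · subst h0
    rw [jmap_lo k ℓ σ₁ σ₂ η (k+0) (by omega) (by omega), pext]
    rw [dif_neg (by omega), if_pos rfl]
    simp
  · by_cases hℓi : i ≤ ℓ
    · rw [jmap_mid k ℓ σ₁ σ₂ η (k+i) (by omega) (by omega), pext,
        dif_pos (show 1 ≤ i ∧ i ≤ ℓ by omega)]
      congr 1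
      simp only [Fin.mk.injEq]
      omega
    · have : i = ℓ + 1 := by omega
      subst this
      rw [jmap_hi k ℓ σ₁ σ₂ η (k+(ℓ+1)) (by omega) (by omega), pext,
        dif_neg (by omega), if_neg (by omega)]
      congr 1
      omega

lemma pext_cons (n : ℕ) (a b c : Bool) (η : Fin n → Bool) (i : ℕ) :
    pext (n+1) a b (Fin.cons c η) (i+1) = pext n c b η i := by
  unfold pext
  rcases Nat.eq_zero_or_pos i with h0 | h0
  · subst h0
    rw [dif_pos (by omega : 1 ≤ 1 ∧ 1 ≤ n+1)]
    simp
  · by_cases hn : i ≤ n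
    · rw [dif_pos (by omega : 1 ≤ i+1 ∧ i+1 ≤ n+1), dif_pos (by omega : 1 ≤ i ∧ i ≤ n)]
      have hfin : (⟨i+1-1, by omega⟩ : Fin (n+1)) = Fin.succ ⟨i-1, by omega⟩ := by
        ext; simp; omega
      rw [hfin, Fin.cons_succ]
    · rw [dif_neg (by omega), dif_neg (by omega), if_neg (by omega), if_neg (by omega)]

lemma pext_zero (n : ℕ) (a b : Bool) (η : Fin n → Bool) : pext n a b η 0 = a := by
  simp [pext]

lemma pext_top (n : ℕ) (a b : Bool) (η : Fin n → Bool) : pext n a b η (n+1) = b := by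
  simp [pext]

lemma path_sum (h1 : 1/2 < ρ) (n : ℕ) (a b : Bool) :
    ∑ η : Fin n → Bool,
      ∏ i ∈ Finset.range (n+1), Mtr ρ (pext n a b η i) (pext n a b η (i+1))
    = S ρ (n+1) a b := by
  induction n generalizing a with
  | zero =>
    have : S ρ 1 a b = ∑ c : Bool, Mtr ρ a c * S ρ 0 c b := rfl
    rw [this, Fintype.sum_bool]
    cases b <;> simp [S, pext]
  | succ n ih =>
    rw [← Equiv.sum_comp (Fin.consEquiv (fun _ : Fin (n+1) => Bool))]
    rw [Fintype.sum_prod_type]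
    have key : ∀ (c : Bool) (η : Fin n → Bool),
        ∏ i ∈ Finset.range (n+2),
          Mtr ρ (pext (n+1) a b (Fin.cons c η) i) (pext (n+1) a b (Fin.cons c η) (i+1))
        = Mtr ρ a c * ∏ i ∈ Finset.range (n+1), Mtr ρ (pext n c b η i) (pext n c b η (i+1)) := by
      intro c η
      rw [Finset.prod_range_succ']
      rw [mul_comm]
      congr 1
      · exact Finset.prod_congr rfl fun i _ => by rw [pext_cons, pext_cons]
    have : S ρ (n+2) a b = ∑ c : Bool, Mtr ρ a c * S ρ (n+1) c b := rfl
    rw [this]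
    refine Finset.sum_congr rfl fun c _ => ?_
    have := fun η : Fin n → Bool => key c η
    calc ∑ η : Fin n → Bool,
          ∏ i ∈ Finset.range (n+1+1),
            Mtr ρ (pext (n+1) a b ((Fin.consEquiv fun _ => Bool) (c, η)) i)
              (pext (n+1) a b ((Fin.consEquiv fun _ => Bool) (c, η)) (i+1))
        = ∑ η : Fin n → Bool,
            Mtr ρ a c * ∏ i ∈ Finset.range (n+1), Mtr ρ (pext n c b η i) (pext n c b η (i+1)) :=
          Finset.sum_congr rfl fun η _ => key c η
      _ = Mtr ρ a c * S ρ (n+1) c b := by rw [← Finset.mul_sum, ih]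


/-- **Exponential decay of correlations for the grand canonical measure.** -/
theorem decay_of_correlations (ρ : ℝ) (hρ : ρ ∈ Set.Ioo (1/2 : ℝ) 1) :
    ∃ C C' : ℝ, 0 < C ∧ 0 < C' ∧
      ∀ k ℓ : ℕ, 1 ≤ k → 1 ≤ ℓ →
      ∀ σ₁ σ₂ : ℕ → Bool, noAdj k σ₁ → noAdj k σ₂ →
        |(∑ τ : Fin (2 * k + ℓ) → Bool,
            if (∀ x ∈ Finset.Icc 1 k, extSeg (2 * k + ℓ) τ x = σ₁ x) ∧
               (∀ x ∈ Finset.Icc 1 k, extSeg (2 * k + ℓ) τ (k + ℓ + x) = σ₂ x)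
            then W ρ (2 * k + ℓ) (extSeg (2 * k + ℓ) τ) else 0)
          - W ρ k σ₁ * W ρ k σ₂|
        ≤ C' * Real.exp (-C * ℓ) * (W ρ k σ₁ * W ρ k σ₂) := by
  obtain ⟨h1, h2⟩ := hρ
  have hρ0 : (0:ℝ) < ρ := by linarith
  have h1ρ : (0:ℝ) < 1 - ρ := by linarith
  refine ⟨Real.log (ρ/(1-ρ)), 2, ?_, by norm_num, ?_⟩
  · apply Real.log_pos
    rw [lt_div_iff₀ h1ρ]; linarith
  intro k ℓ hk hℓ σ₁ σ₂ hσ₁ hσ₂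
  -- left inverse property
  have hleft : ∀ τ ∈ Finset.univ.filter (fun τ : Fin (2*k+ℓ) → Bool =>
      (∀ x ∈ Finset.Icc 1 k, extSeg (2 * k + ℓ) τ x = σ₁ x) ∧
      (∀ x ∈ Finset.Icc 1 k, extSeg (2 * k + ℓ) τ (k + ℓ + x) = σ₂ x)),
      jmap k ℓ σ₁ σ₂ (fun j : Fin ℓ => τ ⟨k + j.val, by have := j.isLt; omega⟩) = τ := by
    intro τ hτ
    simp only [Finset.mem_filter, Finset.mem_univ, true_and] at hτ
    obtain ⟨hc1, hc2⟩ := hτ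
    funext idx
    have hidx := idx.isLt
    by_cases hlt : idx.val < k
    · have h := hc1 (idx.val+1) (by simp only [Finset.mem_Icc]; omega)
      rw [extSeg, dif_pos ⟨by omega, by omega⟩] at h
      simp only [jmap]
      rw [dif_pos hlt, ← h]
      exact congrArg τ (Fin.ext rfl)
    · by_cases hlt2 : idx.val < k + ℓ
      · simp only [jmap]
        rw [dif_neg hlt, dif_pos hlt2]
        congr 1
        apply Fin.ext
        simp
        omega
      · have h := hc2 (idx.val+1-k-ℓ) (by simp only [Finset.mem_Icc]; omega)
        rw [extSeg, dif_pos ⟨by omega, by omega⟩] at h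
        simp only [jmap]
        rw [dif_neg hlt, dif_neg hlt2, ← h]
        congr 1
        apply Fin.ext
        simp
        omega
  have hstep1 :
      (∑ τ : Fin (2 * k + ℓ) → Bool,
          if (∀ x ∈ Finset.Icc 1 k, extSeg (2 * k + ℓ) τ x = σ₁ x) ∧
             (∀ x ∈ Finset.Icc 1 k, extSeg (2 * k + ℓ) τ (k + ℓ + x) = σ₂ x)
          then W ρ (2 * k + ℓ) (extSeg (2 * k + ℓ) τ) else 0)
      = ∑ η : Fin ℓ → Bool, W ρ (2*k+ℓ) (extSeg (2*k+ℓ) (jmap k ℓ σ₁ σ₂ η)) := by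
    classical
    rw [show (∑ τ : Fin (2 * k + ℓ) → Bool,
          if (∀ x ∈ Finset.Icc 1 k, extSeg (2 * k + ℓ) τ x = σ₁ x) ∧
             (∀ x ∈ Finset.Icc 1 k, extSeg (2 * k + ℓ) τ (k + ℓ + x) = σ₂ x)
          then W ρ (2 * k + ℓ) (extSeg (2 * k + ℓ) τ) else 0)
        = ∑ τ ∈ Finset.univ.filter (fun τ : Fin (2*k+ℓ) → Bool =>
            (∀ x ∈ Finset.Icc 1 k, extSeg (2 * k + ℓ) τ x = σ₁ x) ∧
            (∀ x ∈ Finset.Icc 1 k, extSeg (2 * k + ℓ) τ (k + ℓ + x) = σ₂ x)),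
            W ρ (2 * k + ℓ) (extSeg (2 * k + ℓ) τ)
      from by rw [Finset.sum_filter]]
    refine Finset.sum_nbij'
      (fun τ => fun j : Fin ℓ => τ ⟨k + j.val, by have := j.isLt; omega⟩)
      (jmap k ℓ σ₁ σ₂) (fun τ _ => Finset.mem_univ _) ?_ hleft ?_ ?_
    · intro η _
      simp only [Finset.mem_filter, Finset.mem_univ, true_and]
      refine ⟨fun x hx => ?_, fun x hx => ?_⟩
      · simp only [Finset.mem_Icc] at hx
        exact jmap_lo k ℓ σ₁ σ₂ η x hx.1 hx.2
      · simp only [Finset.mem_Icc] at hx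
        rw [jmap_hi k ℓ σ₁ σ₂ η (k+ℓ+x) (by omega) (by omega)]
        congr 1
        omega
    · intro η _
      funext j
      have hj := j.isLt
      simp only [jmap]
      rw [dif_neg (by omega : ¬ k + j.val < k), dif_pos (by omega : k + j.val < k + ℓ)]
      congr 1
      apply Fin.ext
      simp
    · intro τ hτ
      rw [hleft τ hτ]
  -- notation
  set a := σ₁ k with ha
  set b := σ₂ 1 with hb
  set Q : ℝ := ∏ x ∈ Finset.Ico 1 k, Mtr ρ (σ₂ x) (σ₂ (x+1)) with hQ
  have hW1 : W ρ k σ₁ = piv ρ (σ₁ 1) * ∏ x ∈ Finset.Ico 1 k, Mtr ρ (σ₁ x) (σ₁ (x+1)) :=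
    W_eq_V h1 h2 k hk σ₁
  have hW2 : W ρ k σ₂ = piv ρ b * Q := W_eq_V h1 h2 k hk σ₂
  have hsplit : ∀ η : Fin ℓ → Bool,
      W ρ (2*k+ℓ) (extSeg (2*k+ℓ) (jmap k ℓ σ₁ σ₂ η))
      = W ρ k σ₁ *
        ((∏ i ∈ Finset.range (ℓ+1), Mtr ρ (pext ℓ a b η i) (pext ℓ a b η (i+1))) * Q) := by
    intro η
    rw [W_eq_V h1 h2 _ (by omega), V]
    rw [← Finset.prod_Ico_consecutive _ (show 1 ≤ k by omega) (show k ≤ 2*k+ℓ by omega),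
        ← Finset.prod_Ico_consecutive _ (show k ≤ k+ℓ+1 by omega) (show k+ℓ+1 ≤ 2*k+ℓ by omega)]
    have e1 : piv ρ (extSeg (2*k+ℓ) (jmap k ℓ σ₁ σ₂ η) 1) = piv ρ (σ₁ 1) := by
      rw [jmap_lo k ℓ σ₁ σ₂ η 1 le_rfl hk]
    have e2 : (∏ x ∈ Finset.Ico 1 k, Mtr ρ (extSeg (2*k+ℓ) (jmap k ℓ σ₁ σ₂ η) x)
          (extSeg (2*k+ℓ) (jmap k ℓ σ₁ σ₂ η) (x+1)))
        = ∏ x ∈ Finset.Ico 1 k, Mtr ρ (σ₁ x) (σ₁ (x+1)) := by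
      refine Finset.prod_congr rfl fun x hx => ?_
      simp only [Finset.mem_Ico] at hx
      rw [jmap_lo k ℓ σ₁ σ₂ η x hx.1 (by omega),
        jmap_lo k ℓ σ₁ σ₂ η (x+1) (by omega) (by omega)]
    have e3 : (∏ x ∈ Finset.Ico k (k+ℓ+1), Mtr ρ (extSeg (2*k+ℓ) (jmap k ℓ σ₁ σ₂ η) x)
          (extSeg (2*k+ℓ) (jmap k ℓ σ₁ σ₂ η) (x+1)))
        = ∏ i ∈ Finset.range (ℓ+1), Mtr ρ (pext ℓ a b η i) (pext ℓ a b η (i+1)) := by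
      rw [Finset.prod_Ico_eq_prod_range, show k+ℓ+1-k = ℓ+1 by omega]
      refine Finset.prod_congr rfl fun i hi => ?_
      simp only [Finset.mem_range] at hi
      rw [show k + i + 1 = k + (i+1) from by omega,
        jmap_pext k ℓ hk σ₁ σ₂ η i (by omega),
        jmap_pext k ℓ hk σ₁ σ₂ η (i+1) (by omega)]
    have e4 : (∏ x ∈ Finset.Ico (k+ℓ+1) (2*k+ℓ), Mtr ρ (extSeg (2*k+ℓ) (jmap k ℓ σ₁ σ₂ η) x)
          (extSeg (2*k+ℓ) (jmap k ℓ σ₁ σ₂ η) (x+1)))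
        = Q := by
      rw [hQ, Finset.prod_Ico_eq_prod_range, Finset.prod_Ico_eq_prod_range,
        show 2*k+ℓ-(k+ℓ+1) = k-1 by omega, show k-1 = k-1 from rfl]
      refine Finset.prod_congr rfl fun i hi => ?_
      simp only [Finset.mem_range] at hi
      rw [jmap_hi k ℓ σ₁ σ₂ η (k+ℓ+1+i) (by omega) (by omega),
        jmap_hi k ℓ σ₁ σ₂ η (k+ℓ+1+i+1) (by omega) (by omega),
        show k+ℓ+1+i-k-ℓ = 1+i from by omega,
        show k+ℓ+1+i+1-k-ℓ = 1+i+1 from by omega]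
    rw [e1, e2, e3, e4, hW1]
    ring
  have hsum : (∑ η : Fin ℓ → Bool, W ρ (2*k+ℓ) (extSeg (2*k+ℓ) (jmap k ℓ σ₁ σ₂ η)))
      = W ρ k σ₁ * (S ρ (ℓ+1) a b * Q) := by
    rw [Finset.sum_congr rfl fun η _ => hsplit η, ← Finset.mul_sum, ← Finset.sum_mul,
      path_sum h1 ℓ a b]
  rw [hstep1, hsum, hW2, S_closed h1 (ℓ+1) a b]
  set t := (-(1-ρ)/ρ)^(ℓ+1) with ht
  set q : ℝ := (1-ρ)/ρ with hqdef
  have hqpos : (0:ℝ) < q := div_pos h1ρ hρ0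
  have hW1nn : 0 ≤ W ρ k σ₁ := by
    rw [hW1]
    exact mul_nonneg (piv_pos h1 h2 _).le
      (Finset.prod_nonneg fun x _ => Mtr_nonneg h1 h2 _ _)
  have hQnn : 0 ≤ Q := Finset.prod_nonneg fun x _ => Mtr_nonneg h1 h2 _ _
  have hpiv1 : piv ρ b ≤ 1 := by cases b <;> simp [piv] <;> linarith
  have hpiv0 : 0 < piv ρ b := piv_pos h1 h2 b
  have hdelta : |(if a = b then (1:ℝ) else 0) - piv ρ b| ≤ 1 := by
    rw [abs_le]
    by_cases hab : a = b <;> simp [hab] <;> constructor <;> linarith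
  have hexp : Real.exp (-(Real.log (ρ/(1-ρ))) * (ℓ:ℝ)) = q^ℓ := by
    rw [show (-(Real.log (ρ/(1-ρ))) * (ℓ:ℝ)) = (ℓ:ℝ) * (-(Real.log (ρ/(1-ρ)))) from by ring,
      Real.exp_nat_mul, Real.exp_neg, Real.exp_log (div_pos hρ0 h1ρ), inv_div]
  have htabs : |t| = q^(ℓ+1) := by
    rw [ht, abs_pow, abs_div, abs_neg, abs_of_pos h1ρ, abs_of_pos hρ0]
  have key : W ρ k σ₁ * ((piv ρ b + t * ((if a = b then (1:ℝ) else 0) - piv ρ b)) * Q)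
      - W ρ k σ₁ * (piv ρ b * Q)
      = (W ρ k σ₁ * Q * ((if a = b then (1:ℝ) else 0) - piv ρ b)) * t := by ring
  rw [key, hexp]
  rw [abs_mul, htabs, abs_mul, abs_mul, abs_of_nonneg hW1nn, abs_of_nonneg hQnn]
  have hcore : |(if a = b then (1:ℝ) else 0) - piv ρ b| * q ≤ 2 * piv ρ b := by
    have h2' : q ≤ 2*(1-ρ) := by
      rw [hqdef, div_le_iff₀ hρ0]; nlinarith
    have h3' : (1-ρ) ≤ piv ρ b := by cases b <;> simp [piv] <;> linarith
    calc |(if a = b then (1:ℝ) else 0) - piv ρ b| * q ≤ 1 * q :=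
          mul_le_mul_of_nonneg_right hdelta hqpos.le
      _ = q := one_mul _
      _ ≤ 2*(1-ρ) := h2'
      _ ≤ 2 * piv ρ b := by linarith
  calc W ρ k σ₁ * Q * |(if a = b then (1:ℝ) else 0) - piv ρ b| * q^(ℓ+1)
      = (W ρ k σ₁ * Q * q^ℓ) * (|(if a = b then (1:ℝ) else 0) - piv ρ b| * q) := by
        rw [pow_succ]; ring
    _ ≤ (W ρ k σ₁ * Q * q^ℓ) * (2 * piv ρ b) := by
        apply mul_le_mul_of_nonneg_left hcore
        exact mul_nonneg (mul_nonneg hW1nn hQnn) (pow_nonneg hqpos.le ℓ)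
    _ = 2 * q^ℓ * (W ρ k σ₁ * (piv ρ b * Q)) := by ring


end FEP
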